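/- Let A and B be Archimedean semiprime f-algebras with point separating order duals and with weak order units e_A and e_B respectively, and let T : A → B be a weak Markov operator. If T is a lattice homomorphism, then T is an extreme point of the convex set of all weak Markov operators from A to B. -/

import Mathlib

set_option linter.unusedSectionVars false
set_option maxHeartbeats 1000000

namespace Stmt8Aux

section Generic
variable {M : Type*} [AddCommGroup M] [Lattice M] [Module ℝ M]
  [CovariantClass M M (· + ·) (· ≤ ·)]

theorem infSupRight (u w v : M) : (u ⊔ w) ⊓ v = (u ⊓ v) ⊔ (w ⊓ v) :=
  @inf_sup_right M (AddCommGroup.toDistribLattice M) u w v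

theorem absEqZero {a : M} (h : |a| = 0) : a = 0 := by
  have h1 : a ≤ 0 := (le_abs_self a).trans h.le
  have h2 : -a ≤ 0 := (neg_le_abs a).trans h.le
  exact le_antisymm h1 (by simpa using h2)

theorem infPosPart {u v : M} (hv : 0 ≤ v) : u⁺ ⊓ v = (u ⊓ v)⁺ := by
  rw [posPart_def, posPart_def, infSupRight, inf_eq_left.mpr hv]

theorem sumLe {ι : Type*} (s : Finset ι) (f g : ι → M) (h : ∀ i ∈ s, f i ≤ g i) :
    ∑ i ∈ s, f i ≤ ∑ i ∈ s, g i := by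
  induction s using Finset.cons_induction with
  | empty => simp
  | cons a s ha ih =>
      rw [Finset.sum_cons, Finset.sum_cons]
      exact add_le_add (h a (Finset.mem_cons_self a s))
        (ih fun i hi => h i (Finset.mem_cons_of_mem hi))

theorem doubleInf (x y : M) : (x ⊓ y) + (x ⊓ y) = x + y - |y - x| := by
  have h1 := inf_add_sup x y
  have h2 : x ⊔ y = |y - x| + x ⊓ y := by
    have := sup_sub_inf_eq_abs_sub x y
    rw [← this]; abel
  rw [h2] at h1
  have h3 : x ⊓ y + (|y - x| + x ⊓ y) - |y - x| = x ⊓ y + x ⊓ y := by abel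
  rw [← h3, h1]

theorem subInfPos (x y : M) : x - x ⊓ y = (x - y)⁺ := by
  rw [sub_inf, sub_self, posPart_def, sup_comm]

theorem stepId (x t s : M) (hs : 0 ≤ s) : x ⊓ t + ((x - t)⁺ ⊓ s) = x ⊓ (t + s) := by
  have h1 : (x - t)⁺ ⊓ s = ((x - t) ⊓ s) ⊔ (0 ⊓ s) := by rw [posPart_def, infSupRight]
  have h2 : (0:M) ⊓ s = 0 := inf_eq_left.mpr hs
  have h3 : (x - t) ⊓ s = (x ⊓ (t + s)) - t := by
    rw [inf_sub x (t + s) t, add_sub_cancel_left]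
  have h4 : ((x ⊓ (t + s)) - t) ⊔ 0 = ((x ⊓ (t + s)) ⊔ t) - t := by
    rw [sup_sub, sub_self]
  have h5 : (x ⊓ (t + s)) ⊓ t + ((x ⊓ (t + s)) ⊔ t) = (x ⊓ (t + s)) + t :=
    inf_add_sup _ _
  have h6 : (x ⊓ (t + s)) ⊓ t = x ⊓ t := by
    rw [inf_assoc, inf_eq_right.mpr (le_add_of_nonneg_right hs : t ≤ t + s)]
  rw [h1, h2, h3, h4]
  rw [h6] at h5
  have h7 : (x ⊓ (t + s)) ⊔ t = x ⊓ (t + s) + t - (x ⊓ t) := by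
    rw [← h5]; abel
  rw [h7]; abel

theorem sumPartition (x e : M) (hx : 0 ≤ x) (he : 0 ≤ e) (n : ℕ) :
    ∑ k ∈ Finset.range n, ((x - (k:ℝ) • e)⁺ ⊓ e) = x ⊓ ((n:ℝ) • e) := by
  induction n with
  | zero => simp [inf_eq_right.mpr hx]
  | succ n ih =>
      rw [Finset.sum_range_succ, ih, stepId x ((n:ℝ) • e) e he]
      congr 1
      push_cast
      rw [add_smul, one_smul]

theorem uNonneg (x e : M) (he : 0 ≤ e) (k : ℕ) : 0 ≤ (x - (k:ℝ) • e)⁺ ⊓ e :=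
  le_inf (posPart_nonneg _) he

theorem uLe (x e : M) (k : ℕ) : (x - (k:ℝ) • e)⁺ ⊓ e ≤ e := inf_le_right

theorem uAntitone (x e : M) (he : 0 ≤ e) {j k : ℕ} (hjk : j ≤ k) :
    (x - (k:ℝ) • e)⁺ ⊓ e ≤ (x - (j:ℝ) • e)⁺ ⊓ e := by
  refine inf_le_inf_right e (posPart_mono (sub_le_sub_left ?_ x))
  rw [Nat.cast_smul_eq_nsmul, Nat.cast_smul_eq_nsmul]
  exact nsmul_le_nsmul_left he hjk

theorem uDisj (x e : M) (he : 0 ≤ e) (j : ℕ) :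
    ((x - ((j:ℝ)+1) • e)⁺ ⊓ e) ⊓ (e - ((x - (j:ℝ) • e)⁺ ⊓ e)) = 0 := by
  set w := x - ((j:ℝ)+1) • e with hw
  have h1 : (x - ((j:ℝ)+1) • e)⁺ ⊓ e ≤ w⁺ := inf_le_left
  have h2 : e - ((x - (j:ℝ) • e)⁺ ⊓ e) ≤ w⁻ := by
    have hle : (x - (j:ℝ) • e) ⊓ e ≤ (x - (j:ℝ) • e)⁺ ⊓ e :=
      inf_le_inf_right e (le_posPart _)
    have h3 : e - ((x - (j:ℝ) • e)⁺ ⊓ e) ≤ e - ((x - (j:ℝ) • e) ⊓ e) :=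
      sub_le_sub_left hle e
    refine h3.trans ?_
    rw [sub_inf]
    have hnw : e - (x - (j:ℝ) • e) = -w := by
      rw [hw, add_smul, one_smul]; abel
    rw [hnw, sub_self, negPart_def]
  have hge : 0 ≤ ((x - ((j:ℝ)+1) • e)⁺ ⊓ e) ⊓ (e - ((x - (j:ℝ) • e)⁺ ⊓ e)) :=
    le_inf (le_inf (posPart_nonneg _) he) (sub_nonneg.mpr (uLe x e j))
  have hle' : ((x - ((j:ℝ)+1) • e)⁺ ⊓ e) ⊓ (e - ((x - (j:ℝ) • e)⁺ ⊓ e)) ≤ w⁺ ⊓ w⁻ :=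
    inf_le_inf h1 h2
  rw [posPart_inf_negPart_eq_zero] at hle'
  exact le_antisymm hle' hge

variable (hsm : ∀ (r : ℝ) (x : M), 0 ≤ r → 0 ≤ x → 0 ≤ r • x)
include hsm

theorem smulMono {x y : M} {r : ℝ} (hr : 0 ≤ r) (h : x ≤ y) : r • x ≤ r • y := by
  have := hsm r (y - x) hr (sub_nonneg.mpr h)
  rw [smul_sub] at this
  exact sub_nonneg.mp this

theorem smulInf {x y : M} {r : ℝ} (hr : 0 < r) : r • (x ⊓ y) = r • x ⊓ r • y := by
  refine le_antisymm (le_inf (smulMono hsm hr.le inf_le_left)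
    (smulMono hsm hr.le inf_le_right)) ?_
  have h := le_inf
    (show r⁻¹ • (r • x ⊓ r • y) ≤ x by
      have := smulMono hsm (by positivity : (0:ℝ) ≤ r⁻¹) (inf_le_left (a := r • x) (b := r • y))
      rwa [smul_smul, inv_mul_cancel₀ hr.ne', one_smul] at this)
    (show r⁻¹ • (r • x ⊓ r • y) ≤ y by
      have := smulMono hsm (by positivity : (0:ℝ) ≤ r⁻¹) (inf_le_right (a := r • x) (b := r • y))
      rwa [smul_smul, inv_mul_cancel₀ hr.ne', one_smul] at this)
  have h2 := smulMono hsm hr.le h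
  rwa [smul_smul, mul_inv_cancel₀ hr.ne', one_smul] at h2

theorem smulSup {x y : M} {r : ℝ} (hr : 0 < r) : r • (x ⊔ y) = r • x ⊔ r • y := by
  have h := smulInf hsm (x := -x) (y := -y) hr
  have hxy : x ⊔ y = -(-x ⊓ -y) := by rw [neg_inf, neg_neg, neg_neg]
  rw [hxy, smul_neg, h, neg_inf, ← smul_neg, ← smul_neg, neg_neg, neg_neg]

theorem smulPosPart {x : M} {r : ℝ} (hr : 0 < r) : (r • x)⁺ = r • x⁺ := by
  rw [posPart_def, posPart_def, smulSup hsm hr, smul_zero]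

end Generic

section Hom
variable {A B : Type*} [AddCommGroup A] [Lattice A] [Module ℝ A]
  [CovariantClass A A (· + ·) (· ≤ ·)]
  [AddCommGroup B] [Lattice B] [Module ℝ B]
  [CovariantClass B B (· + ·) (· ≤ ·)]

theorem latHomInf (T : A →ₗ[ℝ] B) (hlat : ∀ a : A, T |a| = |T a|) (x y : A) :
    T (x ⊓ y) = T x ⊓ T y := by
  have hA := doubleInf x y
  have hB := doubleInf (T x) (T y)
  have h1 : T (x ⊓ y) + T (x ⊓ y) = T x + T y - |T y - T x| := by
    rw [← map_add, hA, map_sub, map_add, hlat, map_sub]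
  rw [← hB] at h1
  have h2 : (2:ℝ) • T (x ⊓ y) = (2:ℝ) • (T x ⊓ T y) := by
    rw [two_smul, two_smul]; exact h1
  have h3 := congrArg (fun z => (2⁻¹:ℝ) • z) h2
  simpa [smul_smul] using h3
end Hom

section Balg
variable {B : Type*} [Ring B] [Lattice B] [Algebra ℝ B]
  [CovariantClass B B (· + ·) (· ≤ ·)]
  (hmulB : ∀ x y : B, 0 ≤ x → 0 ≤ y → 0 ≤ x * y)
  (hfB : ∀ x y z : B, 0 ≤ z → x ⊓ y = 0 → (x * z) ⊓ y = 0 ∧ (z * x) ⊓ y = 0)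

include hfB in
theorem disjMul {x y : B} (hx : 0 ≤ x) (hy : 0 ≤ y) (h : x ⊓ y = 0) :
    x * y = 0 ∧ y * x = 0 := by
  constructor
  · have h1 : (x * y) ⊓ y = 0 := (hfB x y y hy h).1
    have h1' : y ⊓ (x * y) = 0 := by rw [inf_comm] at h1; exact h1
    have h2 : (x * y) ⊓ (x * y) = 0 := (hfB y (x * y) x hx h1').2
    rwa [inf_idem] at h2
  · have h0 : y ⊓ x = 0 := by rw [inf_comm] at h; exact h
    have h1 : (y * x) ⊓ x = 0 := (hfB y x x hx h0).1
    have h1' : x ⊓ (y * x) = 0 := by rw [inf_comm] at h1; exact h1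
    have h2 : (y * x) ⊓ (y * x) = 0 := (hfB x (y * x) y hy h1').2
    rwa [inf_idem] at h2

include hmulB in
theorem mulLeRight {x y z : B} (h : x ≤ y) (hz : 0 ≤ z) : x * z ≤ y * z := by
  have := hmulB (y - x) z (sub_nonneg.mpr h) hz
  rw [sub_mul] at this
  exact sub_nonneg.mp this

include hmulB in
theorem mulLeLeft {x y z : B} (h : x ≤ y) (hz : 0 ≤ z) : z * x ≤ z * y := by
  have := hmulB z (y - x) hz (sub_nonneg.mpr h)
  rw [mul_sub] at this
  exact sub_nonneg.mp this

include hmulB hfB in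
theorem sqDecomp (x : B) : x * x = x⁺ * x⁺ + x⁻ * x⁻ := by
  have hd := disjMul hfB (posPart_nonneg x) (negPart_nonneg x) (posPart_inf_negPart_eq_zero x)
  conv_lhs => rw [← posPart_sub_negPart x]
  rw [sub_mul, mul_sub, mul_sub, hd.1, hd.2]
  abel

include hmulB hfB in
theorem sqNonneg' (x : B) : 0 ≤ x * x := by
  rw [sqDecomp hmulB hfB x]
  exact add_nonneg (hmulB _ _ (posPart_nonneg x) (posPart_nonneg x))
    (hmulB _ _ (negPart_nonneg x) (negPart_nonneg x))

include hmulB hfB in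
theorem sqLe {x z : B} (hz : 0 ≤ z) (h1 : -z ≤ x) (h2 : x ≤ z) : x * x ≤ z * z := by
  have habs : |x| ≤ z := abs_le'.mpr ⟨h2, neg_le.mp h1⟩
  have hp : x⁺ ≤ |x| := by
    rw [← posPart_add_negPart x]; exact le_add_of_nonneg_right (negPart_nonneg x)
  have hn : x⁻ ≤ |x| := by
    rw [← posPart_add_negPart x]; exact le_add_of_nonneg_left (posPart_nonneg x)
  have e2 : x⁺ * x⁺ ≤ z * x⁺ := mulLeRight hmulB (hp.trans habs) (posPart_nonneg x)
  have e3 : x⁻ * x⁻ ≤ z * x⁻ := mulLeRight hmulB (hn.trans habs) (negPart_nonneg x)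
  have e4 : z * x⁺ + z * x⁻ = z * |x| := by rw [← mul_add, posPart_add_negPart]
  have e5 : z * |x| ≤ z * z := mulLeLeft hmulB habs hz
  calc x * x = x⁺ * x⁺ + x⁻ * x⁻ := sqDecomp hmulB hfB x
    _ ≤ z * x⁺ + z * x⁻ := add_le_add e2 e3
    _ = z * |x| := e4
    _ ≤ z * z := e5

variable (hsm : ∀ (r : ℝ) (x : B), 0 ≤ r → 0 ≤ x → 0 ≤ r • x)
  (harch : ∀ x y : B, (∀ n : ℕ, n • x ≤ y) → x ≤ 0)
  (eB : B) (heB : 0 ≤ eB)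
  (hwou : ∀ x : B, |x| ⊓ eB = 0 → x = 0)

include hsm harch heB hwou in
theorem weakUnitArch (v x : B) (hv : 0 ≤ v) (hx : 0 ≤ x)
    (h : ∀ m : ℕ, 1 ≤ m → v ≤ (x - (m:ℝ) • eB)⁺) : v = 0 := by
  have key : ∀ m : ℕ, m • (v ⊓ eB) ≤ x := by
    intro m
    rcases Nat.eq_zero_or_pos m with hm | hm
    · simpa [hm] using hx
    have hm1 : (1:ℝ) ≤ (m:ℝ) := by exact_mod_cast hm
    have hmpos : (0:ℝ) < (m:ℝ) := by linarith
    have hy : v ⊓ eB ≤ ((x - (m:ℝ) • eB)⁺) ⊓ eB := inf_le_inf_right _ (h m hm)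
    have hmeB : 0 ≤ (m:ℝ) • eB := hsm _ _ hmpos.le heB
    have hsmy : (m:ℝ) • (((x - (m:ℝ) • eB)⁺) ⊓ eB)
        = (((m:ℝ) • x - ((m:ℝ) * (m:ℝ)) • eB) ⊓ ((m:ℝ) • eB))⁺ := by
      rw [smulInf hsm hmpos, ← smulPosPart hsm hmpos, smul_sub, smul_smul,
        infPosPart hmeB]
    set s := ((m:ℝ) • x - ((m:ℝ) * (m:ℝ)) • eB) ⊓ ((m:ℝ) • eB) with hs
    have h1 : s ≤ (m:ℝ) • eB := inf_le_right
    have h2 : (m:ℝ) • s ≤ ((m:ℝ) * (m:ℝ)) • eB := by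
      rw [mul_smul]; exact smulMono hsm hmpos.le h1
    have h3 : s ≤ (m:ℝ) • x - (m:ℝ) • s :=
      le_trans inf_le_left (sub_le_sub_left h2 ((m:ℝ) • x))
    have h4 : s + (m:ℝ) • s ≤ (m:ℝ) • x := le_sub_iff_add_le.mp h3
    have h5 : ((1:ℝ) + (m:ℝ)) • s ≤ (m:ℝ) • x := by
      rw [add_smul, one_smul]; exact h4
    have hmne : (0:ℝ) < 1 + (m:ℝ) := by linarith
    have h6 : s ≤ (((1:ℝ)+(m:ℝ))⁻¹ * (m:ℝ)) • x := by
      have := smulMono hsm (by positivity : (0:ℝ) ≤ ((1:ℝ)+(m:ℝ))⁻¹) h5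
      rwa [smul_smul, inv_mul_cancel₀ hmne.ne', one_smul, smul_smul] at this
    have h7 : (((1:ℝ)+(m:ℝ))⁻¹ * (m:ℝ)) • x ≤ x := by
      have hc : (0:ℝ) ≤ 1 - ((1:ℝ)+(m:ℝ))⁻¹ * (m:ℝ) := by
        rw [sub_nonneg, inv_mul_le_iff₀ hmne]; linarith
      have := hsm _ x hc hx
      rw [sub_smul, one_smul] at this
      exact sub_nonneg.mp this
    have h9 : s⁺ ≤ x := by
      have h8' := posPart_mono (h6.trans h7)
      simp only at h8'
      rwa [posPart_eq_self.mpr hx] at h8'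
    calc m • (v ⊓ eB) = (m:ℝ) • (v ⊓ eB) := (Nat.cast_smul_eq_nsmul ℝ m _).symm
      _ ≤ (m:ℝ) • (((x - (m:ℝ) • eB)⁺) ⊓ eB) := smulMono hsm hmpos.le hy
      _ = s⁺ := hsmy
      _ ≤ x := h9
  have h0 : v ⊓ eB ≤ 0 := harch _ x key
  have hinf : v ⊓ eB = 0 := le_antisymm h0 (le_inf hv heB)
  apply hwou
  rwa [abs_of_nonneg hv]

end Balg

end Stmt8Aux
namespace Stmt8Aux

section Main
variable {A B : Type*}
  [Ring A] [Lattice A] [Algebra ℝ A] [CovariantClass A A (· + ·) (· ≤ ·)]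
  [Ring B] [Lattice B] [Algebra ℝ B] [CovariantClass B B (· + ·) (· ≤ ·)]

theorem domEq
    (hsmA : ∀ (r : ℝ) (x : A), 0 ≤ r → 0 ≤ x → 0 ≤ r • x)
    (hsmB : ∀ (r : ℝ) (x : B), 0 ≤ r → 0 ≤ x → 0 ≤ r • x)
    (hmulB : ∀ x y : B, 0 ≤ x → 0 ≤ y → 0 ≤ x * y)
    (hfB : ∀ x y z : B, 0 ≤ z → x ⊓ y = 0 → (x * z) ⊓ y = 0 ∧ (z * x) ⊓ y = 0)
    (harchB : ∀ x y : B, (∀ n : ℕ, n • x ≤ y) → x ≤ 0)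
    (hsemiB : ∀ x : B, x * x = 0 → x = 0)
    (eA : A) (eB : B) (heA : 0 ≤ eA) (heB : 0 ≤ eB)
    (heBwou : ∀ x : B, |x| ⊓ eB = 0 → x = 0)
    (T : A →ₗ[ℝ] B) (hTpos : ∀ a : A, 0 ≤ a → 0 ≤ T a) (hTe : T eA = eB)
    (hlat : ∀ a : A, T |a| = |T a|)
    (S : A →ₗ[ℝ] B) (hSpos : ∀ a : A, 0 ≤ a → 0 ≤ S a) (hSe : S eA = eB)
    (c : ℝ) (hc : 1 ≤ c) (hdom : ∀ x : A, 0 ≤ x → S x ≤ c • T x) :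
    S = T := by
  have hc0 : (0:ℝ) < c := lt_of_lt_of_le one_pos hc
  have hTinf : ∀ x y : A, T (x ⊓ y) = T x ⊓ T y := latHomInf T hlat
  have hTdom : ∀ x : A, 0 ≤ x → T x ≤ c • T x := by
    intro x hx
    have h := hsmB (c - 1) (T x) (by linarith) (hTpos x hx)
    rw [sub_smul, one_smul] at h
    exact sub_nonneg.mp h
  have hdisjB : ∀ x y : A, 0 ≤ x → 0 ≤ y → x ⊓ y = 0 →
      ∀ vx vy : B, 0 ≤ vx → 0 ≤ vy → vx ≤ c • T x → vy ≤ c • T y → vx ⊓ vy = 0 := by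
    intro x y hx hy hxy vx vy hvx hvy h1 h2
    have hTT : T x ⊓ T y = 0 := by rw [← hTinf, hxy, map_zero]
    have h3 : vx ⊓ vy ≤ (c • T x) ⊓ (c • T y) := inf_le_inf h1 h2
    rw [← smulInf hsmB hc0, hTT, smul_zero] at h3
    exact le_antisymm h3 (le_inf hvx hvy)
  -- the bounded case
  have bdd : ∀ a : A, 0 ≤ a → a ≤ eA → S a = T a := by
    intro a ha hae
    set d := S a - T a with hd
    have harchInput : ∀ n : ℕ, n • (d * d) ≤ eB * eB := by
      intro n
      rcases Nat.eq_zero_or_pos n with hn | hn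
      · simp only [hn, zero_smul]
        exact hmulB eB eB heB heB
      have hnR : (0:ℝ) < (n:ℝ) := by exact_mod_cast hn
      set x : A := (n:ℝ) • a with hx
      set u : ℕ → A := fun k => (x - (k:ℝ) • eA)⁺ ⊓ eA with hu
      have hu0 : ∀ k, 0 ≤ u k := fun k => uNonneg x eA heA k
      have hue : ∀ k, u k ≤ eA := fun k => uLe x eA k
      have hum : ∀ j k : ℕ, j ≤ k → u k ≤ u j := fun j k h => uAntitone x eA heA h
      have husum : ∑ k ∈ Finset.range n, u k = (n:ℝ) • a := by
        simp only [hu]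
        rw [sumPartition x eA (hsmA _ _ hnR.le ha) heA n, hx,
          ← smulInf hsmA hnR, inf_eq_left.mpr hae]
      have hud : ∀ k : ℕ, u (k+1) ⊓ (eA - u k) = 0 := by
        intro k
        have h := uDisj x eA heA k
        have hcast : (((k+1 : ℕ)):ℝ) = (k:ℝ)+1 := by push_cast; ring
        show ((x - ((k+1:ℕ):ℝ) • eA)⁺ ⊓ eA) ⊓ (eA - ((x - (k:ℝ) • eA)⁺ ⊓ eA)) = 0
        rw [hcast]
        exact h
      -- product identities
      have prodid : ∀ (F G : A →ₗ[ℝ] B),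
          (∀ z : A, 0 ≤ z → 0 ≤ F z) → (∀ z : A, 0 ≤ z → F z ≤ c • T z) →
          (∀ z : A, 0 ≤ z → 0 ≤ G z) → G eA = eB → (∀ z : A, 0 ≤ z → G z ≤ c • T z) →
          ∀ j k : ℕ, k < j →
          F (u j) * G (u k) = F (u j) * eB ∧ G (u k) * F (u j) = eB * F (u j) := by
        intro F G hFpos hFdom hGpos hGe hGdom j k hkj
        obtain ⟨m, rfl⟩ : ∃ m, j = m + 1 := ⟨j - 1, by omega⟩
        have hkm : k ≤ m := by omega
        have hdm : u (m+1) ⊓ (eA - u m) = 0 := hud m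
        have heAum : 0 ≤ eA - u m := sub_nonneg.mpr (hue m)
        have hFu : 0 ≤ F (u (m+1)) := hFpos _ (hu0 _)
        have hGv : 0 ≤ G (eA - u m) := hGpos _ heAum
        have hdisj : F (u (m+1)) ⊓ G (eA - u m) = 0 :=
          hdisjB _ _ (hu0 _) heAum hdm _ _ hFu hGv (hFdom _ (hu0 _)) (hGdom _ heAum)
        have hGea : G (eA - u m) = eB - G (u m) := by rw [map_sub, hGe]
        rw [hGea] at hdisj hGv
        have hz := disjMul hfB hFu hGv hdisj
        have e1 : F (u (m+1)) * eB = F (u (m+1)) * G (u m) := by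
          have h := hz.1
          rw [mul_sub] at h
          exact sub_eq_zero.mp h
        have e2 : eB * F (u (m+1)) = G (u m) * F (u (m+1)) := by
          have h := hz.2
          rw [sub_mul] at h
          exact sub_eq_zero.mp h
        have hGmk : G (u m) ≤ G (u k) := by
          have h0 := hGpos _ (sub_nonneg.mpr (hum k m hkm))
          rw [map_sub] at h0
          exact sub_nonneg.mp h0
        have hGke : G (u k) ≤ eB := by
          have h0 := hGpos _ (sub_nonneg.mpr (hue k))
          rw [map_sub, hGe] at h0
          exact sub_nonneg.mp h0
        constructor
        · refine le_antisymm (mulLeLeft hmulB hGke hFu) ?_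
          rw [e1]
          exact mulLeLeft hmulB hGmk hFu
        · refine le_antisymm (mulLeRight hmulB hGke hFu) ?_
          rw [e2]
          exact mulLeRight hmulB hGmk hFu
      set Q : ℕ → B := fun j => S (u j) with hQ
      set P : ℕ → B := fun j => T (u j) with hP
      set D : ℕ → B := fun j => Q j - P j with hD
      have hDD : ∀ j k : ℕ, j ≠ k → D j * D k = 0 := by
        intro j k hne
        rcases lt_or_gt_of_ne hne with h | h
        · -- j < k, use left identities (second components), big index k
          have q1 := (prodid S S hSpos hdom hSpos hSe hdom k j h).2
          have q2 := (prodid T S hTpos hTdom hSpos hSe hdom k j h).2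
          have q3 := (prodid S T hSpos hdom hTpos hTe hTdom k j h).2
          have q4 := (prodid T T hTpos hTdom hTpos hTe hTdom k j h).2
          show (Q j - P j) * (Q k - P k) = 0
          rw [sub_mul, mul_sub, mul_sub]
          rw [hQ, hP]
          simp only []
          rw [q1, q2, q3, q4]
          abel
        · -- k < j, use right identities (first components), big index j
          have q1 := (prodid S S hSpos hdom hSpos hSe hdom j k h).1
          have q2 := (prodid S T hSpos hdom hTpos hTe hTdom j k h).1
          have q3 := (prodid T S hTpos hTdom hSpos hSe hdom j k h).1
          have q4 := (prodid T T hTpos hTdom hTpos hTe hTdom j k h).1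
          show (Q j - P j) * (Q k - P k) = 0
          rw [sub_mul, mul_sub, mul_sub]
          rw [hQ, hP]
          simp only []
          rw [q1, q2, q3, q4]
          abel
      have hsumD : ∑ j ∈ Finset.range n, D j = (n:ℝ) • d := by
        simp only [hD, hQ, hP]
        rw [Finset.sum_sub_distrib, ← map_sum, ← map_sum, husum, map_smul, map_smul,
          hd, smul_sub]
      have hsq : ((n:ℝ) • d) * ((n:ℝ) • d) = ∑ j ∈ Finset.range n, D j * D j := by
        rw [← hsumD, Finset.sum_mul_sum]
        refine Finset.sum_congr rfl fun j hj => ?_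
        exact Finset.sum_eq_single j (fun k _ hkj => hDD j k (Ne.symm hkj))
          (fun hj' => absurd hj hj')
      have hDb : ∀ j ∈ Finset.range n, D j * D j ≤ eB * eB := by
        intro j _
        have h1 : 0 ≤ Q j := hSpos _ (hu0 j)
        have h1' : 0 ≤ P j := hTpos _ (hu0 j)
        have h2 : P j ≤ eB := by
          have h0 := hTpos _ (sub_nonneg.mpr (hue j))
          rw [map_sub, hTe] at h0
          exact sub_nonneg.mp h0
        have h2' : Q j ≤ eB := by
          have h0 := hSpos _ (sub_nonneg.mpr (hue j))
          rw [map_sub, hSe] at h0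
          exact sub_nonneg.mp h0
        refine sqLe hmulB hfB heB ?_ ?_
        · calc -eB = 0 - eB := by abel
            _ ≤ 0 - P j := sub_le_sub_left h2 0
            _ ≤ Q j - P j := sub_le_sub_right h1 _
        · calc Q j - P j ≤ Q j - 0 := sub_le_sub_left h1' _
            _ = Q j := by abel
            _ ≤ eB := h2'
      have hfin : ((n:ℝ) * (n:ℝ)) • (d * d) ≤ (n:ℝ) • (eB * eB) := by
        have h1 : ((n:ℝ) • d) * ((n:ℝ) • d) = ((n:ℝ) * (n:ℝ)) • (d * d) := by
          rw [smul_mul_assoc, mul_smul_comm, smul_smul]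
        have h2 := sumLe (Finset.range n) _ (fun _ => eB * eB) hDb
        rw [Finset.sum_const, Finset.card_range, ← Nat.cast_smul_eq_nsmul ℝ n (eB*eB)] at h2
        calc ((n:ℝ) * (n:ℝ)) • (d * d) = ∑ j ∈ Finset.range n, D j * D j := by
              rw [← h1, hsq]
          _ ≤ (n:ℝ) • (eB * eB) := h2
      have hdiv : (n:ℝ) • (d * d) ≤ eB * eB := by
        have h3 := smulMono hsmB (show (0:ℝ) ≤ (n:ℝ)⁻¹ by positivity) hfin
        rw [smul_smul, smul_smul, show (n:ℝ)⁻¹ * ((n:ℝ) * (n:ℝ)) = (n:ℝ) by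
          field_simp, show (n:ℝ)⁻¹ * (n:ℝ) = 1 by field_simp, one_smul] at h3
        exact h3
      rw [← Nat.cast_smul_eq_nsmul ℝ n (d*d)]
      exact hdiv
    have hdd0 : d * d ≤ 0 := harchB _ _ harchInput
    have hdd : d * d = 0 := le_antisymm hdd0 (sqNonneg' hmulB hfB d)
    have hdz := hsemiB d hdd
    rw [hd] at hdz
    exact sub_eq_zero.mp hdz
  -- the general nonnegative case
  have main : ∀ a : A, 0 ≤ a → S a = T a := by
    intro a ha
    set d := S a - T a with hd
    have hbd : ∀ m : ℕ, 1 ≤ m → (c+1)⁻¹ • |d| ≤ (T a - (m:ℝ) • eB)⁺ := by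
      intro m hm
      have hmR : (0:ℝ) < (m:ℝ) := by exact_mod_cast hm
      set am := a ⊓ ((m:ℝ) • eA) with ham'
      have ham : 0 ≤ am := le_inf ha (hsmA _ _ hmR.le heA)
      have hame : am ≤ (m:ℝ) • eA := inf_le_right
      have hbam : S am = T am := by
        have h1 : 0 ≤ (m:ℝ)⁻¹ • am := hsmA _ _ (by positivity) ham
        have h2 : (m:ℝ)⁻¹ • am ≤ eA := by
          have := smulMono hsmA (show (0:ℝ) ≤ (m:ℝ)⁻¹ by positivity) hame
          rwa [smul_smul, inv_mul_cancel₀ hmR.ne', one_smul] at this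
        have h3 := bdd _ h1 h2
        rw [map_smul, map_smul] at h3
        have h4 := congrArg (fun z => (m:ℝ) • z) h3
        simpa [smul_smul, mul_inv_cancel₀ hmR.ne'] using h4
      set r := a - am with hr'
      have hr : 0 ≤ r := sub_nonneg.mpr inf_le_left
      have hdr : d = S r - T r := by
        rw [hd, hr', map_sub, map_sub, hbam]
        abel
      have hSr : S r ≤ c • T r := hdom r hr
      have hTr0 : 0 ≤ T r := hTpos r hr
      have hSr0 : 0 ≤ S r := hSpos r hr
      have hcTr : c • T r ≤ (c+1) • T r := by
        have := hsmB 1 (T r) zero_le_one hTr0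
        rw [one_smul] at this
        calc c • T r = c • T r + 0 := by abel
          _ ≤ c • T r + T r := by exact add_le_add_right this _
          _ = (c+1) • T r := by rw [add_smul, one_smul]
      have h4 : d ≤ (c+1) • T r := by
        rw [hdr]
        calc S r - T r ≤ S r - 0 := sub_le_sub_left hTr0 _
          _ = S r := by abel
          _ ≤ c • T r := hSr
          _ ≤ (c+1) • T r := hcTr
      have h5 : -d ≤ (c+1) • T r := by
        rw [hdr]
        have hTcr : T r ≤ (c+1) • T r := by
          have h1 := hsmB c (T r) hc0.le hTr0
          calc T r = 0 + T r := by abel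
            _ ≤ c • T r + T r := add_le_add_left h1 _
            _ = (c+1) • T r := by rw [add_smul, one_smul]
        calc -(S r - T r) = T r - S r := by abel
          _ ≤ T r - 0 := sub_le_sub_left hSr0 _
          _ = T r := by abel
          _ ≤ (c+1) • T r := hTcr
      have habs : |d| ≤ (c+1) • T r := abs_le'.mpr ⟨h4, h5⟩
      have hcp : (0:ℝ) < c + 1 := by linarith
      have h6 : (c+1)⁻¹ • |d| ≤ T r := by
        have := smulMono hsmB (show (0:ℝ) ≤ (c+1)⁻¹ by positivity) habs
        rwa [smul_smul, inv_mul_cancel₀ hcp.ne', one_smul] at this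
      have h7 : T r = (T a - (m:ℝ) • eB)⁺ := by
        rw [hr', map_sub, ham', hTinf, map_smul, hTe, subInfPos]
      rw [← h7]
      exact h6
    have habs0 : (c+1)⁻¹ • |d| = 0 := by
      have hcp : (0:ℝ) < c + 1 := by linarith
      refine weakUnitArch hsmB harchB eB heB heBwou _ (T a) ?_ (hTpos a ha) hbd
      exact hsmB _ _ (by positivity) (abs_nonneg d)
    have hdabs : |d| = 0 := by
      have hcp : (0:ℝ) < c + 1 := by linarith
      have := congrArg (fun z => (c+1) • z) habs0
      simpa [smul_smul, mul_inv_cancel₀ hcp.ne'] using this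
    have hd0 : d = 0 := absEqZero hdabs
    rw [hd] at hd0
    exact sub_eq_zero.mp hd0
  -- conclude
  ext a
  have h1 := main a⁺ (posPart_nonneg a)
  have h2 := main a⁻ (negPart_nonneg a)
  calc S a = S (a⁺ - a⁻) := by rw [posPart_sub_negPart]
    _ = S a⁺ - S a⁻ := map_sub S _ _
    _ = T a⁺ - T a⁻ := by rw [h1, h2]
    _ = T (a⁺ - a⁻) := (map_sub T _ _).symm
    _ = T a := by rw [posPart_sub_negPart]

end Main
end Stmt8Aux



/-- If a weak Markov operator `T` between Archimedean semiprime `f`-algebras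
with point separating order duals and weak order units `e_A`, `e_B` is a
lattice homomorphism, then `T` is an extreme point of the set of all weak
Markov operators. -/
theorem stmt_8
    {A B : Type*}
    [Ring A] [Lattice A] [Algebra ℝ A] [CovariantClass A A (· + ·) (· ≤ ·)]
    -- A is a Riesz space (vector lattice) over ℝ
    (hsmulA : ∀ (r : ℝ) (x : A), 0 ≤ r → 0 ≤ x → 0 ≤ r • x)
    -- A is a lattice-ordered algebra
    (hmulA : ∀ x y : A, 0 ≤ x → 0 ≤ y → 0 ≤ x * y)
    -- the f-algebra condition
    (hfA : ∀ x y z : A, 0 ≤ z → x ⊓ y = 0 → (x * z) ⊓ y = 0 ∧ (z * x) ⊓ y = 0)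
    -- A is Archimedean
    (harchA : ∀ x y : A, (∀ n : ℕ, n • x ≤ y) → x ≤ 0)
    -- the order dual of A separates the points of A
    (hsepA : ∀ x : A, x ≠ 0 → ∃ f : A →ₗ[ℝ] ℝ, Monotone f ∧ f x ≠ 0)
    -- A is semiprime
    (hsemiA : ∀ x : A, x * x = 0 → x = 0)
    [Ring B] [Lattice B] [Algebra ℝ B] [CovariantClass B B (· + ·) (· ≤ ·)]
    -- B is a Riesz space (vector lattice) over ℝ
    (hsmulB : ∀ (r : ℝ) (x : B), 0 ≤ r → 0 ≤ x → 0 ≤ r • x)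
    -- B is a lattice-ordered algebra
    (hmulB : ∀ x y : B, 0 ≤ x → 0 ≤ y → 0 ≤ x * y)
    -- the f-algebra condition
    (hfB : ∀ x y z : B, 0 ≤ z → x ⊓ y = 0 → (x * z) ⊓ y = 0 ∧ (z * x) ⊓ y = 0)
    -- B is Archimedean
    (harchB : ∀ x y : B, (∀ n : ℕ, n • x ≤ y) → x ≤ 0)
    -- the order dual of B separates the points of B
    (hsepB : ∀ x : B, x ≠ 0 → ∃ f : B →ₗ[ℝ] ℝ, Monotone f ∧ f x ≠ 0)
    -- B is semiprime
    (hsemiB : ∀ x : B, x * x = 0 → x = 0)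
    (eA : A) (eB : B)
    -- eA is a weak order unit of A
    (heApos : 0 < eA) (heAwou : ∀ x : A, |x| ⊓ eA = 0 → x = 0)
    -- eB is a weak order unit of B
    (heBpos : 0 < eB) (heBwou : ∀ x : B, |x| ⊓ eB = 0 → x = 0)
    (T : A →ₗ[ℝ] B)
    -- T is a weak Markov operator
    (hTpos : ∀ a : A, 0 ≤ a → 0 ≤ T a) (hTe : T eA = eB)
    -- T is a lattice homomorphism
    (hlat : ∀ a : A, T |a| = |T a|) :
    T ∈ Set.extremePoints ℝ {S : A →ₗ[ℝ] B | (∀ a : A, 0 ≤ a → 0 ≤ S a) ∧ S eA = eB} := by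
  rw [mem_extremePoints]
  refine ⟨⟨hTpos, hTe⟩, ?_⟩
  intro S₁ hS₁ S₂ hS₂ hseg
  obtain ⟨θ₁, θ₂, hθ₁, hθ₂, hθs, hT⟩ := hseg
  have happ : ∀ x : A, θ₁ • S₁ x + θ₂ • S₂ x = T x := by
    intro x
    rw [← hT]
    simp [LinearMap.add_apply, LinearMap.smul_apply]
  have hkey : ∀ (S S' : A →ₗ[ℝ] B) (θ θ' : ℝ), 0 < θ → 0 < θ' → θ + θ' = 1 →
      (∀ a : A, 0 ≤ a → 0 ≤ S a) → S eA = eB →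
      (∀ a : A, 0 ≤ a → 0 ≤ S' a) →
      (∀ x : A, θ • S x + θ' • S' x = T x) → S = T := by
    intro S S' θ θ' hθ hθ' hθsum hSpos hSe hS'pos happ'
    have hθ1 : θ ≤ 1 := by linarith
    have hc : 1 ≤ θ⁻¹ := by
      rw [le_inv_comm₀] <;> simp [hθ, hθ1]
    have hdom : ∀ x : A, 0 ≤ x → S x ≤ θ⁻¹ • T x := by
      intro x hx
      have h1 : θ • S x ≤ T x := by
        rw [← happ' x]
        have h2 := hsmulB θ' (S' x) hθ'.le (hS'pos x hx)
        calc θ • S x = θ • S x + 0 := by abel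
          _ ≤ θ • S x + θ' • S' x := add_le_add_right h2 _
      have h3 := Stmt8Aux.smulMono hsmulB (show (0:ℝ) ≤ θ⁻¹ by positivity) h1
      rwa [smul_smul, inv_mul_cancel₀ hθ.ne', one_smul] at h3
    exact Stmt8Aux.domEq hsmulA hsmulB hmulB hfB harchB hsemiB eA eB heApos.le heBpos.le
      heBwou T hTpos hTe hlat S hSpos hSe θ⁻¹ hc hdom
  have hS₁T : S₁ = T :=
    hkey S₁ S₂ θ₁ θ₂ hθ₁ hθ₂ hθs hS₁.1 hS₁.2 hS₂.1 happ
  have hS₂T : S₂ = T := by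
    refine hkey S₂ S₁ θ₂ θ₁ hθ₂ hθ₁ (by linarith) hS₂.1 hS₂.2 hS₁.1 ?_
    intro x
    rw [← happ x]
    abel
  exact ⟨hS₁T, hS₂T⟩
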